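/- The set Φ = {φ ∈ Δ : (ψ, φ) > 0} is contained in Δ₊, contains ψ, and has cardinality 2h − 3. -/

import Mathlib

open scoped RealInnerProductSpace

/-- Reflection of a real inner product space in the hyperplane orthogonal to `v`,
i.e. the orthogonal reflection fixing `(ℝ ∙ v)ᗮ` and sending `v` to `-v`. -/
noncomputable def rootReflection {V : Type*} [NormedAddCommGroup V] [InnerProductSpace ℝ V]
    [FiniteDimensional ℝ V] (v : V) : V ≃ₗᵢ[ℝ] V :=
  Submodule.reflection ((ℝ ∙ v)ᗮ)

/-- The orbit of `v` under the cyclic group generated by `σ`. -/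
def cyclicOrbit {V : Type*} [NormedAddCommGroup V] [InnerProductSpace ℝ V]
    (σ : V ≃ₗᵢ[ℝ] V) (v : V) : Set V :=
  {x | ∃ m : ℤ, (σ ^ m) v = x}

lemma rootReflection_apply' {V : Type*} [NormedAddCommGroup V] [InnerProductSpace ℝ V]
    [FiniteDimensional ℝ V] (v w : V) :
    rootReflection v w = w - (2 * ⟪v, w⟫ / ⟪v, v⟫) • v := by
  rw [rootReflection, Submodule.reflection_orthogonal_apply, Submodule.reflection_singleton_apply]
  rw [real_inner_self_eq_norm_sq]
  simp only [RCLike.ofReal_real_eq_id, id_eq]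
  rw [two_smul]
  rw [div_eq_mul_inv, div_eq_mul_inv, mul_assoc, mul_comm (⟪v,w⟫) _]
  module


theorem stmt_6
    {V : Type*} [NormedAddCommGroup V] [InnerProductSpace ℝ V] [FiniteDimensional ℝ V]
    (Δ : Finset V)
    -- `Δ` is an irreducible reduced simply-laced root system spanning `V`
    (hspan : Submodule.span ℝ (Δ : Set V) = ⊤)
    (hzero : (0 : V) ∉ Δ)
    (hreduced : ∀ φ ∈ Δ, ∀ c : ℝ, c • φ ∈ Δ → c = 1 ∨ c = -1)
    (hrefl : ∀ φ ∈ Δ, ∀ θ ∈ Δ, rootReflection φ θ ∈ Δ)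
    (hint : ∀ φ ∈ Δ, ∀ θ ∈ Δ, ∃ m : ℤ, 2 * ⟪φ, θ⟫ / ⟪φ, φ⟫ = (m : ℝ))
    (hlaced : ∀ φ ∈ Δ, ∀ θ ∈ Δ, ‖φ‖ = ‖θ‖)
    (hirred : ∀ A B : Set V, (Δ : Set V) = A ∪ B → (∀ a ∈ A, ∀ b ∈ B, ⟪a, b⟫ = 0) →
      A = ∅ ∨ B = ∅)
    -- base of simple roots `Π = {α i : i ∈ I}`
    {ι : Type*} [Fintype ι] [DecidableEq ι]
    (α : ι → V) (hα : ∀ i, α i ∈ Δ) (hαind : LinearIndependent ℝ α)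
    (hbase : ∀ φ ∈ Δ, (∃ c : ι → ℕ, φ = ∑ i, (c i : ℝ) • α i) ∨
      (∃ c : ι → ℕ, φ = -∑ i, (c i : ℝ) • α i))
    -- the Coxeter number `h = card Δ / ℓ`
    (h : ℕ) (hcox : Δ.card = h * Fintype.card ι)
    -- the positive roots `Δ₊`
    (Δpos : Finset V)
    (hΔpos : ∀ φ, φ ∈ Δpos ↔ φ ∈ Δ ∧ ∃ c : ι → ℕ, φ = ∑ i, (c i : ℝ) • α i)
    -- the highest root `ψ`
    (ψ : V) (hψmem : ψ ∈ Δ)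
    (hψhigh : ∀ φ ∈ Δ, ∃ c : ι → ℕ, ψ - φ = ∑ i, (c i : ℝ) • α i)
    -- the Heisenberg subsystem `Φ`
    (Φ : Set V) (hΦ : Φ = {φ : V | φ ∈ Δ ∧ 0 < ⟪ψ, φ⟫}) :
    Φ ⊆ (Δpos : Set V) ∧ ψ ∈ Φ ∧ Φ.ncard = 2 * h - 3 := by
  classical
  have hne0 : ∀ φ ∈ Δ, φ ≠ 0 := fun φ hφ e => hzero (e ▸ hφ)
  have hψ0 : ψ ≠ 0 := hne0 ψ hψmem
  set a : ℝ := ⟪ψ, ψ⟫ with ha_def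
  have ha : 0 < a := by
    rw [ha_def, real_inner_self_eq_norm_sq]
    exact pow_pos (norm_pos_iff.mpr hψ0) 2
  have hnormφ : ∀ φ ∈ Δ, ⟪φ, φ⟫ = a := by
    intro φ hφ
    rw [ha_def, real_inner_self_eq_norm_sq, real_inner_self_eq_norm_sq, hlaced φ hφ ψ hψmem]
  have hneg : ∀ φ ∈ Δ, -φ ∈ Δ := by
    intro φ hφ
    have h1 := hrefl φ hφ φ hφ
    have h2 : (2 * ⟪φ, φ⟫ / ⟪φ, φ⟫ : ℝ) = 2 := by
      have : (⟪φ, φ⟫ : ℝ) ≠ 0 := ne_of_gt (hnormφ φ hφ ▸ ha)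
      field_simp
    rw [rootReflection_apply', h2] at h1
    have h3 : φ - (2:ℝ) • φ = -φ := by module
    rwa [h3] at h1
  -- linear independence extraction
  have hlin : ∀ g : ι → ℝ, ∑ i, g i • α i = 0 → ∀ i, g i = 0 :=
    Fintype.linearIndependent_iff.mp hαind
  -- ψ is a positive root
  have hψe : ∃ e : ι → ℕ, ψ = ∑ i, ((e i : ℝ)) • α i := by
    rcases hbase ψ hψmem with he | ⟨c, hc⟩
    · exact he
    · exfalso
      obtain ⟨d, hd⟩ := hψhigh (-ψ) (hneg ψ hψmem)
      rw [sub_neg_eq_add] at hd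
      have hsum : ∑ i, ((d i : ℝ) + 2 * (c i : ℝ)) • α i = 0 := by
        have hsplit : ∑ i, ((d i : ℝ) + 2 * (c i : ℝ)) • α i
            = (∑ i, (d i : ℝ) • α i) + (2:ℝ) • ∑ i, (c i : ℝ) • α i := by
          rw [Finset.smul_sum]
          simp [add_smul, Finset.sum_add_distrib, mul_smul]
        rw [hsplit, ← hd, hc]
        module
      have hze : ∀ i, (d i : ℝ) + 2 * (c i : ℝ) = 0 := hlin _ hsum
      have hc0 : ∀ i, (c i : ℝ) = 0 := by
        intro i
        have := hze i
        have h1 : (0:ℝ) ≤ (d i : ℝ) := Nat.cast_nonneg _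
        have h2 : (0:ℝ) ≤ (c i : ℝ) := Nat.cast_nonneg _
        linarith
      apply hψ0
      rw [hc]
      simp [hc0]
  obtain ⟨e, hψeq⟩ := hψe
  have hψpos : ψ ∈ Δpos := (hΔpos ψ).mpr ⟨hψmem, e, hψeq⟩
  -- integrality of inner products with ψ
  have hinner : ∀ φ ∈ Δ, ∃ m : ℤ, ⟪ψ, φ⟫ = (m : ℝ) * (a / 2) := by
    intro φ hφ
    obtain ⟨m, hm⟩ := hint φ hφ ψ hψmem
    refine ⟨m, ?_⟩
    rw [hnormφ φ hφ] at hm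
    rw [real_inner_comm]
    have : a ≠ 0 := ne_of_gt ha
    field_simp at hm ⊢
    linarith
  -- strict Cauchy-Schwarz for non-proportional roots
  have hCS : ∀ φ ∈ Δ, φ ≠ ψ → φ ≠ -ψ → |⟪ψ, φ⟫| < a := by
    intro φ hφ hne1 hne2
    have hnn : ‖φ‖ = ‖ψ‖ := hlaced φ hφ ψ hψmem
    have hle : |⟪ψ, φ⟫| ≤ ‖ψ‖ * ‖φ‖ := abs_real_inner_le_norm ψ φ
    have haeq : a = ‖ψ‖ * ‖φ‖ := by rw [hnn, ha_def, real_inner_self_eq_norm_mul_norm]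
    rcases lt_or_eq_of_le hle with hlt | heq
    · rwa [haeq]
    · exfalso
      rcases abs_eq (by positivity : (0:ℝ) ≤ ‖ψ‖ * ‖φ‖) |>.mp heq with hp | hm
      · have := inner_eq_norm_mul_iff_real.mp hp
        rw [hnn] at this
        have hψn : (‖ψ‖ : ℝ) ≠ 0 := norm_ne_zero_iff.mpr hψ0
        apply hne1
        exact (smul_right_injective V hψn this).symm
      · have hp : ⟪ψ, -φ⟫ = ‖ψ‖ * ‖-φ‖ := by
          rw [inner_neg_right, hm, norm_neg]; ring
        have := inner_eq_norm_mul_iff_real.mp hp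
        rw [norm_neg, hnn] at this
        have hψn : (‖ψ‖ : ℝ) ≠ 0 := norm_ne_zero_iff.mpr hψ0
        apply hne2
        have h4 := smul_right_injective V hψn this
        rw [h4, neg_neg]
  -- possible inner products
  have hsmall : ∀ φ ∈ Δ, φ ≠ ψ → φ ≠ -ψ →
      ⟪ψ, φ⟫ = 0 ∨ ⟪ψ, φ⟫ = a / 2 ∨ ⟪ψ, φ⟫ = -(a / 2) := by
    intro φ hφ hne1 hne2
    obtain ⟨m, hm⟩ := hinner φ hφ
    have hlt := hCS φ hφ hne1 hne2
    rw [hm] at hlt ⊢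
    have habs : |(m:ℝ)| * (a/2) < a := by
      rw [abs_mul, abs_of_pos (by linarith : (0:ℝ) < a/2)] at hlt
      linarith
    have hm2 : |(m:ℝ)| < 2 := by
      by_contra hcon
      push_neg at hcon
      nlinarith
    have : (m:ℤ) = 0 ∨ (m:ℤ) = 1 ∨ (m:ℤ) = -1 := by
      have habs2 : |m| < 2 := by
        have : ((|m| : ℤ) : ℝ) < 2 := by rwa [Int.cast_abs]
        exact_mod_cast this
      have := abs_lt.mp habs2
      omega
    rcases this with h0 | h1 | hm1
    · left; rw [h0]; simp
    · right; left; rw [h1]; simp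
    · right; right; rw [hm1]; push_cast; ring
  -- negative roots pair nonpositively with ψ
  have hnegle : ∀ φ ∈ Δ, (∃ c : ι → ℕ, φ = -∑ i, ((c i : ℝ)) • α i) → ⟪ψ, φ⟫ ≤ 0 := by
    intro φ hφ ⟨c, hc⟩
    by_contra hcon
    push_neg at hcon
    have hneψ : φ ≠ -ψ := by
      intro hh
      rw [hh, inner_neg_right] at hcon
      linarith
    have hneψ' : φ ≠ ψ := by
      intro hh
      apply hψ0
      have hsum : ∑ i, ((e i : ℝ) + (c i : ℝ)) • α i = 0 := by
        simp only [add_smul, Finset.sum_add_distrib]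
        rw [← hψeq, ← sub_neg_eq_add, ← hc, ← hh, sub_self]
      have := hlin _ hsum
      have he0 : ∀ i, (e i : ℝ) = 0 := by
        intro i
        have h1 : (0:ℝ) ≤ (e i : ℝ) := Nat.cast_nonneg _
        have h2 : (0:ℝ) ≤ (c i : ℝ) := Nat.cast_nonneg _
        have := this i
        linarith
      rw [hψeq]
      simp [he0]
    have hval : ⟪ψ, φ⟫ = a / 2 := by
      rcases hsmall φ hφ hneψ' hneψ with h0 | h1 | h2
      · linarith
      · exact h1
      · linarith
    have hθ : rootReflection φ ψ ∈ Δ := hrefl φ hφ ψ hψmem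
    have hθval : rootReflection φ ψ = ψ - φ := by
      rw [rootReflection_apply', hnormφ φ hφ, real_inner_comm, hval]
      have : (2 * (a/2) / a : ℝ) = 1 := by field_simp
      rw [this, one_smul]
    rw [hθval] at hθ
    obtain ⟨d, hd⟩ := hψhigh (ψ - φ) hθ
    rw [sub_sub_cancel] at hd
    have hsum : ∑ i, ((d i : ℝ) + (c i : ℝ)) • α i = 0 := by
      simp only [add_smul, Finset.sum_add_distrib]
      rw [← hd, hc]
      module
    have hall := hlin _ hsum
    apply hne0 φ hφ
    have hc0 : ∀ i, (c i : ℝ) = 0 := by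
      intro i
      have h1 : (0:ℝ) ≤ (d i : ℝ) := Nat.cast_nonneg _
      have h2 : (0:ℝ) ≤ (c i : ℝ) := Nat.cast_nonneg _
      have := hall i
      linarith
    rw [hc]
    simp [hc0]
  -- Part 1
  have part1 : Φ ⊆ (Δpos : Set V) := by
    intro φ hφΦ
    rw [hΦ] at hφΦ
    obtain ⟨hφΔ, hφpos⟩ := hφΦ
    rcases hbase φ hφΔ with hpos | hnegc
    · exact (hΔpos φ).mpr ⟨hφΔ, hpos⟩
    · exact absurd (hnegle φ hφΔ hnegc) (not_le.mpr hφpos)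
  have part2 : ψ ∈ Φ := by
    rw [hΦ]
    exact ⟨hψmem, ha⟩
  refine ⟨part1, part2, ?_⟩
  -- ================== Part 3: cardinality ==================
  have hV : Nontrivial V := ⟨ψ, 0, hψ0⟩
  have hιne : Nonempty ι := by
    by_contra hno
    rw [not_nonempty_iff] at hno
    apply hψ0
    rw [hψeq, Finset.univ_eq_empty, Finset.sum_empty]
  have hspanα : Submodule.span ℝ (Set.range α) = ⊤ := by
    rw [← top_le_iff, ← hspan, Submodule.span_le]
    intro φ hφ
    rcases hbase φ hφ with ⟨c, hc⟩ | ⟨c, hc⟩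
    · rw [hc]
      exact Submodule.sum_mem _ fun i _ =>
        Submodule.smul_mem _ _ (Submodule.subset_span ⟨i, rfl⟩)
    · rw [hc]
      exact Submodule.neg_mem _ (Submodule.sum_mem _ fun i _ =>
        Submodule.smul_mem _ _ (Submodule.subset_span ⟨i, rfl⟩))
  have hfr : Module.finrank ℝ V = Fintype.card ι :=
    Module.finrank_eq_card_basis (Module.Basis.mk hαind (by rw [hspanα]))
  -- the operator T
  set T : V →ₗ[ℝ] V :=
    ∑ φ ∈ Δ, LinearMap.smulRight ((innerSL ℝ φ : V →L[ℝ] ℝ) : V →ₗ[ℝ] ℝ) φ with hT_def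
  have hTapp : ∀ v, T v = ∑ φ ∈ Δ, ⟪φ, v⟫ • φ := by
    intro v
    rw [hT_def, LinearMap.sum_apply]
    simp [LinearMap.smulRight_apply]
  have hTsym : T.IsSymmetric := by
    intro x y
    rw [hTapp, hTapp, sum_inner, inner_sum]
    apply Finset.sum_congr rfl
    intro φ hφ
    rw [real_inner_smul_left, real_inner_smul_right, real_inner_comm φ x]
    ring
  have himage : ∀ φ ∈ Δ, Finset.image (fun θ => rootReflection φ θ) Δ = Δ := by
    intro φ hφ
    apply Finset.eq_of_subset_of_card_le
    · intro x hx
      rw [Finset.mem_image] at hx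
      obtain ⟨θ, hθ, rfl⟩ := hx
      exact hrefl φ hφ θ hθ
    · rw [Finset.card_image_of_injective _ (rootReflection φ).injective]
  have hTcomm : ∀ φ ∈ Δ, ∀ v, T (rootReflection φ v) = rootReflection φ (T v) := by
    intro φ hφ v
    rw [hTapp, hTapp, map_sum]
    simp_rw [LinearIsometryEquiv.map_smul]
    conv_lhs => rw [← himage φ hφ]
    rw [Finset.sum_image (fun x _ y _ hxy => (rootReflection φ).injective hxy)]
    apply Finset.sum_congr rfl
    intro θ hθ
    rw [LinearIsometryEquiv.inner_map_map]
  -- eigenvector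
  obtain ⟨μ, hμ⟩ : ∃ μ : ℝ, Module.End.HasEigenvalue T μ :=
    ⟨_, hTsym.hasEigenvalue_iSup_of_finiteDimensional⟩
  obtain ⟨v₀, hv₀E, hv₀ne⟩ := hμ.exists_hasEigenvector
  set E := Module.End.eigenspace T μ with hE_def
  have hmemE : ∀ x : V, x ∈ E ↔ T x = μ • x := fun x => Module.End.mem_eigenspace_iff
  have hEg : ∀ φ ∈ Δ, ∀ x ∈ E, rootReflection φ x ∈ E := by
    intro φ hφ x hx
    rw [hmemE] at hx ⊢
    rw [hTcomm φ hφ, hx, LinearIsometryEquiv.map_smul]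
  have hdich : ∀ φ ∈ Δ, (φ ∈ E) ∨ ∀ x ∈ E, ⟪x, φ⟫ = 0 := by
    intro φ hφ
    by_cases hc : ∀ x ∈ E, ⟪x, φ⟫ = 0
    · exact Or.inr hc
    · left
      push_neg at hc
      obtain ⟨x, hxE, hxne⟩ := hc
      have h1 : x - rootReflection φ x ∈ E := sub_mem hxE (hEg φ hφ x hxE)
      have h2 : x - rootReflection φ x = (2 * ⟪φ, x⟫ / ⟪φ, φ⟫) • φ := by
        rw [rootReflection_apply']
        abel
      rw [h2] at h1
      have hs : (2 * ⟪φ, x⟫ / ⟪φ, φ⟫ : ℝ) ≠ 0 := by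
        apply div_ne_zero
        · have : ⟪φ, x⟫ ≠ 0 := by rwa [real_inner_comm]
          simpa using this
        · rw [hnormφ φ hφ]; exact ne_of_gt ha
      have := E.smul_mem (2 * ⟪φ, x⟫ / ⟪φ, φ⟫)⁻¹ h1
      rwa [inv_smul_smul₀ hs] at this
  -- all roots lie in the eigenspace
  have hΔE : ∀ φ ∈ Δ, φ ∈ E := by
    set A : Set V := {x | x ∈ Δ ∧ x ∈ E} with hA_def
    set B : Set V := {x | x ∈ Δ ∧ x ∉ E ∧ ∀ y ∈ E, ⟪y, x⟫ = 0} with hB_def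
    have hunion : (Δ : Set V) = A ∪ B := by
      apply Set.Subset.antisymm
      · intro x hx
        by_cases hxE : x ∈ E
        · exact Or.inl ⟨hx, hxE⟩
        · rcases hdich x hx with h1 | h2
          · exact absurd h1 hxE
          · exact Or.inr ⟨hx, hxE, h2⟩
      · rintro x (⟨hx, _⟩ | ⟨hx, _, _⟩) <;> exact hx
    have hortho : ∀ x ∈ A, ∀ y ∈ B, ⟪x, y⟫ = 0 := by
      rintro x ⟨_, hxE⟩ y ⟨_, _, hy⟩
      exact hy x hxE
    rcases hirred A B hunion hortho with hAe | hBe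
    · exfalso
      -- then every root is orthogonal to v₀, contradiction with span
      have hall : ∀ x ∈ (Δ : Set V), ⟪v₀, x⟫ = 0 := by
        intro x hx
        have : x ∈ A ∪ B := hunion ▸ hx
        rcases this with hxA | ⟨_, _, hy⟩
        · exact absurd hxA (hAe ▸ Set.notMem_empty x)
        · exact hy v₀ hv₀E
      apply hv₀ne
      have hker : Submodule.span ℝ (Δ : Set V) ≤
          LinearMap.ker ((innerSL ℝ v₀ : V →L[ℝ] ℝ) : V →ₗ[ℝ] ℝ) := by
        rw [Submodule.span_le]
        intro x hx
        simpa using hall x hx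
      rw [hspan, top_le_iff] at hker
      have hv₀0 : ⟪v₀, v₀⟫ = (0:ℝ) := by
        have : v₀ ∈ LinearMap.ker ((innerSL ℝ v₀ : V →L[ℝ] ℝ) : V →ₗ[ℝ] ℝ) := by
          rw [hker]; trivial
        simpa using this
      exact inner_self_eq_zero.mp hv₀0
    · intro φ hφ
      have : φ ∈ A ∪ B := hunion ▸ (Finset.mem_coe.mpr hφ)
      rcases this with ⟨_, hE⟩ | hB
      · exact hE
      · exact absurd hB (hBe ▸ Set.notMem_empty φ)
  have hTid : ∀ v, T v = μ • v := by
    have hEtop : E = ⊤ := by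
      rw [← top_le_iff, ← hspan, Submodule.span_le]
      intro x hx
      exact hΔE x hx
    intro v
    rw [← hmemE, hEtop]
    trivial
  -- compute μ
  set n := Module.finrank ℝ V with hn_def
  have hcardι : (Fintype.card ι : ℝ) = (n : ℝ) := by rw [hfr]
  have hμval : μ = h * a := by
    set b := stdOrthonormalBasis ℝ V with hb_def
    have h1 : ∑ i, ⟪T (b i), b i⟫ = μ * n := by
      have : ∀ i, ⟪T (b i), b i⟫ = μ := by
        intro i
        rw [hTid, real_inner_smul_left, real_inner_self_eq_norm_sq, b.orthonormal.1 i]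
        simp
      rw [Finset.sum_congr rfl fun i _ => this i]
      simp [mul_comm, hn_def]
    have h2 : ∑ i, ⟪T (b i), b i⟫ = Δ.card * a := by
      have : ∀ i, ⟪T (b i), b i⟫ = ∑ φ ∈ Δ, ⟪φ, b i⟫ * ⟪b i, φ⟫ := by
        intro i
        rw [hTapp, sum_inner]
        apply Finset.sum_congr rfl
        intro φ _
        rw [real_inner_smul_left, real_inner_comm φ (b i)]
      rw [Finset.sum_congr rfl fun i _ => this i, Finset.sum_comm]
      have : ∀ φ ∈ Δ, ∑ i, ⟪φ, b i⟫ * ⟪b i, φ⟫ = a := by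
        intro φ hφ
        rw [b.sum_inner_mul_inner φ φ, hnormφ φ hφ]
      rw [Finset.sum_congr rfl this, Finset.sum_const, nsmul_eq_mul]
    have hn0 : (0:ℝ) < (n : ℝ) := by
      have : 0 < n := by
        rw [hn_def]
        exact Module.finrank_pos
      exact_mod_cast this
    have := h1.symm.trans h2
    rw [hcox] at this
    push_cast at this
    rw [hcardι] at this
    have hgoal : μ * n = h * a * n := by rw [this]; ring
    exact mul_right_cancel₀ (ne_of_gt hn0) hgoal
  -- the sum of squared inner products
  have hSsum : ∑ φ ∈ Δ, ⟪ψ, φ⟫ ^ 2 = h * a ^ 2 := by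
    have h1 : ⟪T ψ, ψ⟫ = μ * a := by
      rw [hTid, real_inner_smul_left]
    have h2 : ⟪T ψ, ψ⟫ = ∑ φ ∈ Δ, ⟪ψ, φ⟫ ^ 2 := by
      rw [hTapp, sum_inner]
      apply Finset.sum_congr rfl
      intro φ _
      rw [real_inner_smul_left, real_inner_comm φ ψ]
      ring
    rw [← h2, h1, hμval]
    ring
  -- counting
  have hψneg_ne : -ψ ≠ ψ := by
    intro hh
    apply hψ0
    have h2 : ψ + ψ = 0 := by nth_rewrite 1 [← hh]; simp
    have h3 : (2:ℝ) • ψ = 0 := by rw [two_smul]; exact h2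
    exact (smul_eq_zero.mp h3).resolve_left (by norm_num)
  have hnψΔ : -ψ ∈ Δ := hneg ψ hψmem
  set s : Finset V := (Δ.erase ψ).erase (-ψ) with hs_def
  have hmem_s : ∀ φ ∈ s, φ ∈ Δ ∧ φ ≠ ψ ∧ φ ≠ -ψ := by
    intro φ hφ
    rw [hs_def, Finset.mem_erase, Finset.mem_erase] at hφ
    exact ⟨hφ.2.2, hφ.2.1, hφ.1⟩
  have hsplit : ∑ φ ∈ Δ, ⟪ψ, φ⟫ ^ 2 = a ^ 2 + a ^ 2 + ∑ φ ∈ s, ⟪ψ, φ⟫ ^ 2 := by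
    rw [← Finset.add_sum_erase Δ (fun φ => ⟪ψ, φ⟫ ^ 2) hψmem]
    have hmem2 : -ψ ∈ Δ.erase ψ := Finset.mem_erase.mpr ⟨hψneg_ne, hnψΔ⟩
    rw [← Finset.add_sum_erase (Δ.erase ψ) (fun φ => ⟪ψ, φ⟫ ^ 2) hmem2]
    rw [inner_neg_right]
    ring
  set P : Finset V := s.filter (fun φ => ⟪ψ, φ⟫ ≠ 0) with hP_def
  have hPsum : ∑ φ ∈ s, ⟪ψ, φ⟫ ^ 2 = P.card * (a ^ 2 / 4) := by
    rw [← Finset.sum_filter_add_sum_filter_not s (fun φ => ⟪ψ, φ⟫ ≠ 0)]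
    have hz : ∑ φ ∈ s.filter (fun φ => ¬⟪ψ, φ⟫ ≠ 0), ⟪ψ, φ⟫ ^ 2 = 0 := by
      apply Finset.sum_eq_zero
      intro φ hφ
      rw [Finset.mem_filter] at hφ
      have : ⟪ψ, φ⟫ = 0 := not_not.mp hφ.2
      rw [this]; ring
    rw [hz, add_zero]
    have hc : ∀ φ ∈ P, ⟪ψ, φ⟫ ^ 2 = a ^ 2 / 4 := by
      intro φ hφ
      rw [hP_def, Finset.mem_filter] at hφ
      obtain ⟨hφs, hφne⟩ := hφ
      obtain ⟨hφΔ, hne1, hne2⟩ := hmem_s φ hφs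
      rcases hsmall φ hφΔ hne1 hne2 with h0 | h1 | h2
      · exact absurd h0 hφne
      · rw [h1]; ring
      · rw [h2]; ring
    rw [Finset.sum_congr rfl hc, Finset.sum_const, nsmul_eq_mul]
  have ha2 : (0:ℝ) < a ^ 2 := by positivity
  have hPr : (P.card : ℝ) = 4 * h - 8 := by
    have key : (P.card : ℝ) * a ^ 2 = (4 * h - 8) * a ^ 2 := by
      have e1 : (h:ℝ) * a ^ 2 = a ^ 2 + a ^ 2 + P.card * (a ^ 2 / 4) := by
        rw [← hSsum, hsplit, hPsum]
      linear_combination -4 * e1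
    exact mul_right_cancel₀ (ne_of_gt ha2) key
  have hh2 : 2 ≤ h := by
    have : (0:ℝ) ≤ 4 * h - 8 := hPr ▸ Nat.cast_nonneg _
    have : (2:ℝ) ≤ (h:ℝ) := by linarith
    exact_mod_cast this
  have hPcard : P.card = 4 * h - 8 := by
    have h8 : 8 ≤ 4 * h := by omega
    have : ((4 * h - 8 : ℕ) : ℝ) = 4 * h - 8 := by
      push_cast [Nat.cast_sub h8]
      ring
    exact_mod_cast hPr.trans this.symm
  set Pp : Finset V := P.filter (fun φ => 0 < ⟪ψ, φ⟫) with hPp_def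
  set Pm : Finset V := P.filter (fun φ => ¬0 < ⟪ψ, φ⟫) with hPm_def
  have hPpm : Pp.card + Pm.card = P.card := Finset.card_filter_add_card_filter_not _
  have hbij : Pp.card = Pm.card := by
    apply Finset.card_bij (fun φ _ => -φ)
    · intro φ hφ
      rw [hPp_def, Finset.mem_filter, hP_def, Finset.mem_filter] at hφ
      obtain ⟨⟨hφs, hφne⟩, hφpos⟩ := hφ
      obtain ⟨hφΔ, hne1, hne2⟩ := hmem_s φ hφs
      rw [hPm_def, Finset.mem_filter, hP_def, Finset.mem_filter]
      refine ⟨⟨?_, ?_⟩, ?_⟩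
      · rw [hs_def, Finset.mem_erase, Finset.mem_erase]
        refine ⟨?_, ?_, hneg φ hφΔ⟩
        · intro hcon
          exact hne1 (by rw [← neg_neg φ, hcon, neg_neg])
        · intro hcon
          exact hne2 (by rw [← neg_neg φ, hcon])
      · rw [inner_neg_right]
        simpa using hφne
      · rw [inner_neg_right]
        push_neg
        linarith
    · intro φ₁ h₁ φ₂ h₂ he
      exact neg_injective he
    · intro θ hθ
      refine ⟨-θ, ?_, by simp⟩
      rw [hPm_def, Finset.mem_filter, hP_def, Finset.mem_filter] at hθ
      obtain ⟨⟨hθs, hθne⟩, hθnpos⟩ := hθ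
      obtain ⟨hθΔ, hne1, hne2⟩ := hmem_s θ hθs
      have hθneg : ⟪ψ, θ⟫ < 0 := lt_of_le_of_ne (not_lt.mp hθnpos) hθne
      rw [hPp_def, Finset.mem_filter, hP_def, Finset.mem_filter]
      refine ⟨⟨?_, ?_⟩, ?_⟩
      · rw [hs_def, Finset.mem_erase, Finset.mem_erase]
        refine ⟨?_, ?_, hneg θ hθΔ⟩
        · intro hcon
          exact hne1 (by rw [← neg_neg θ, hcon, neg_neg])
        · intro hcon
          exact hne2 (by rw [← neg_neg θ, hcon])
      · rw [inner_neg_right]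
        intro hcon
        exact hθne (by linarith)
      · rw [inner_neg_right]
        linarith
  have hPpcard : Pp.card = 2 * h - 4 := by omega
  have hψnotPp : ψ ∉ Pp := by
    intro hcon
    rw [hPp_def, Finset.mem_filter, hP_def, Finset.mem_filter] at hcon
    obtain ⟨⟨hψs, _⟩, _⟩ := hcon
    rw [hs_def, Finset.mem_erase, Finset.mem_erase] at hψs
    exact hψs.2.1 rfl
  have hΦeq : Φ = (↑(insert ψ Pp) : Set V) := by
    ext φ
    rw [hΦ]
    simp only [Set.mem_setOf_eq, Finset.coe_insert, Set.mem_insert_iff, Finset.mem_coe]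
    constructor
    · rintro ⟨hφΔ, hφpos⟩
      by_cases hφψ : φ = ψ
      · exact Or.inl hφψ
      · right
        have hφnψ : φ ≠ -ψ := by
          intro hcon
          rw [hcon, inner_neg_right] at hφpos
          linarith
        rw [hPp_def, Finset.mem_filter, hP_def, Finset.mem_filter]
        refine ⟨⟨?_, ne_of_gt hφpos⟩, hφpos⟩
        rw [hs_def, Finset.mem_erase, Finset.mem_erase]
        exact ⟨hφnψ, hφψ, hφΔ⟩
    · rintro (rfl | hφPp)
      · exact ⟨hψmem, ha⟩
      · rw [hPp_def, Finset.mem_filter, hP_def, Finset.mem_filter] at hφPp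
        obtain ⟨⟨hφs, _⟩, hφpos⟩ := hφPp
        exact ⟨(hmem_s φ hφs).1, hφpos⟩
  rw [hΦeq, Set.ncard_coe_finset, Finset.card_insert_of_notMem hψnotPp]
  omega
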